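/- Let X, Y, Z be probability spaces and f : X×Y → ℝ, g : Y×Z → ℝ, h : Z×X → ℝ be square-integrable functions with respect to the relevant product measures. Then ∫∫∫ f(x,y)g(y,z)h(z,x) dx dy dz ≤ sqrt( ∫∫ f² dx dy · ∫∫ g² dy dz · ∫∫ h² dz dx ). -/

import Mathlib

open MeasureTheory

private lemma l2_cs {α : Type*} [MeasurableSpace α] {μ : Measure α} {f g : α → ℝ}
    (hf : MemLp f 2 μ) (hg : MemLp g 2 μ) :
    ∫ a, f a * g a ∂μ ≤ Real.sqrt (∫ a, f a ^ 2 ∂μ) * Real.sqrt (∫ a, g a ^ 2 ∂μ) := by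
  have h22 : (2:ℝ).HolderConjugate 2 := Real.HolderConjugate.two_two
  have hf2 : MemLp f (ENNReal.ofReal 2) μ := by
    convert hf using 2; norm_num
  have hg2 : MemLp g (ENNReal.ofReal 2) μ := by
    convert hg using 2; norm_num
  have key := MeasureTheory.integral_mul_norm_le_Lp_mul_Lq h22 hf2 hg2
  have hsq : ∀ (u : α → ℝ), (∫ a, ‖u a‖ ^ (2:ℝ) ∂μ) = ∫ a, u a ^ 2 ∂μ := by
    intro u
    apply integral_congr_ae
    filter_upwards with a
    rw [Real.norm_eq_abs, show ((2:ℝ)) = ((2:ℕ):ℝ) by norm_num, Real.rpow_natCast, sq_abs]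
  calc ∫ a, f a * g a ∂μ ≤ |∫ a, f a * g a ∂μ| := le_abs_self _
    _ ≤ ∫ a, ‖f a‖ * ‖g a‖ ∂μ := by
        simpa [Real.norm_eq_abs, abs_mul] using
          norm_integral_le_integral_norm (μ := μ) (fun a => f a * g a)
    _ ≤ (∫ a, ‖f a‖ ^ (2:ℝ) ∂μ) ^ (1/(2:ℝ)) * (∫ a, ‖g a‖ ^ (2:ℝ) ∂μ) ^ (1/(2:ℝ)) := key
    _ = Real.sqrt (∫ a, f a ^ 2 ∂μ) * Real.sqrt (∫ a, g a ^ 2 ∂μ) := by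
        rw [Real.sqrt_eq_rpow, Real.sqrt_eq_rpow, hsq f, hsq g]

private lemma l2_cs_sq {α : Type*} [MeasurableSpace α] {μ : Measure α} {f g : α → ℝ}
    (hf : MemLp f 2 μ) (hg : MemLp g 2 μ) :
    (∫ a, f a * g a ∂μ) ^ 2 ≤ (∫ a, f a ^ 2 ∂μ) * (∫ a, g a ^ 2 ∂μ) := by
  have ha : 0 ≤ ∫ a, f a ^ 2 ∂μ := integral_nonneg fun a => sq_nonneg _
  have hb : 0 ≤ ∫ a, g a ^ 2 ∂μ := integral_nonneg fun a => sq_nonneg _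
  have h1 := l2_cs hf hg
  have h2 := l2_cs hf.neg hg
  have h2' : -(∫ a, f a * g a ∂μ) ≤
      Real.sqrt (∫ a, f a ^ 2 ∂μ) * Real.sqrt (∫ a, g a ^ 2 ∂μ) := by
    simpa [neg_mul, integral_neg, neg_sq] using h2
  have habs : |∫ a, f a * g a ∂μ| ≤
      Real.sqrt (∫ a, f a ^ 2 ∂μ) * Real.sqrt (∫ a, g a ^ 2 ∂μ) := abs_le.2 ⟨by linarith, h1⟩
  calc (∫ a, f a * g a ∂μ) ^ 2 = |∫ a, f a * g a ∂μ| ^ 2 := (sq_abs _).symm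
    _ ≤ (Real.sqrt (∫ a, f a ^ 2 ∂μ) * Real.sqrt (∫ a, g a ^ 2 ∂μ)) ^ 2 := by
        exact pow_le_pow_left₀ (abs_nonneg _) habs 2
    _ = (∫ a, f a ^ 2 ∂μ) * (∫ a, g a ^ 2 ∂μ) := by
        rw [mul_pow, Real.sq_sqrt ha, Real.sq_sqrt hb]

theorem friedgut_triangle_integral_inequality
    {X Y Z : Type*} [MeasurableSpace X] [MeasurableSpace Y] [MeasurableSpace Z]
    (μX : Measure X) (μY : Measure Y) (μZ : Measure Z)
    [IsProbabilityMeasure μX] [IsProbabilityMeasure μY] [IsProbabilityMeasure μZ]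
    (f : X × Y → ℝ) (g : Y × Z → ℝ) (h : Z × X → ℝ)
    (hf : MemLp f 2 (μX.prod μY)) (hg : MemLp g 2 (μY.prod μZ))
    (hh : MemLp h 2 (μZ.prod μX)) :
    (∫ x, ∫ y, ∫ z, f (x, y) * g (y, z) * h (z, x) ∂μZ ∂μY ∂μX) ≤
      Real.sqrt ((∫ q, f q ^ 2 ∂(μX.prod μY)) * (∫ q, g q ^ 2 ∂(μY.prod μZ)) *
        (∫ q, h q ^ 2 ∂(μZ.prod μX))) := by
  -- K is the inner integral
  have hg2int : Integrable (fun q => g q ^ 2) (μY.prod μZ) := hg.integrable_sq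
  have hh2int : Integrable (fun q => h q ^ 2) (μZ.prod μX) := hh.integrable_sq
  set G : Y → ℝ := fun y => ∫ z, g (y, z) ^ 2 ∂μZ with hG
  set H : X → ℝ := fun x => ∫ z, h (z, x) ^ 2 ∂μZ with hH
  set K : X × Y → ℝ := fun q => ∫ z, g (q.2, z) * h (z, q.1) ∂μZ with hKdef
  have hGnn : ∀ y, 0 ≤ G y := fun y => integral_nonneg fun z => sq_nonneg _
  have hHnn : ∀ x, 0 ≤ H x := fun x => integral_nonneg fun z => sq_nonneg _
  have hGint : Integrable G μY := hg2int.integral_prod_left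
  have hHint : Integrable H μX := hh2int.integral_prod_right
  -- measure preserving maps
  have mp1 : MeasurePreserving (fun w : (X × Y) × Z => (w.1.2, w.2))
      ((μX.prod μY).prod μZ) (μY.prod μZ) := by
    have hsnd : MeasurePreserving (Prod.snd : X × Y → Y) (μX.prod μY) μY :=
      ⟨measurable_snd, by simp [Measure.map_snd_prod]⟩
    exact hsnd.prod (MeasurePreserving.id μZ)
  have mp2 : MeasurePreserving (fun w : (X × Y) × Z => (w.2, w.1.1))
      ((μX.prod μY).prod μZ) (μZ.prod μX) := by
    have hfst : MeasurePreserving (Prod.fst : X × Y → X) (μX.prod μY) μX :=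
      ⟨measurable_fst, by simp [Measure.map_fst_prod]⟩
    exact Measure.measurePreserving_swap.comp (hfst.prod (MeasurePreserving.id μZ))
  -- K is a.e. strongly measurable
  have hΦm : AEStronglyMeasurable (fun w : (X × Y) × Z => g (w.1.2, w.2) * h (w.2, w.1.1))
      ((μX.prod μY).prod μZ) :=
    (hg.1.comp_quasiMeasurePreserving mp1.quasiMeasurePreserving).mul
      (hh.1.comp_quasiMeasurePreserving mp2.quasiMeasurePreserving)
  have hKm : AEStronglyMeasurable K (μX.prod μY) := hΦm.integral_prod_right'
  -- a.e. sections are in L²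
  have hgsec : ∀ᵐ y ∂μY, MemLp (fun z => g (y, z)) 2 μZ := by
    filter_upwards [hg2int.prod_right_ae, hg.1.prodMk_left] with y h1 h2
    exact (memLp_two_iff_integrable_sq h2).2 h1
  have hhsec : ∀ᵐ x ∂μX, MemLp (fun z => h (z, x)) 2 μZ := by
    filter_upwards [hh2int.prod_left_ae, hh.1.prod_swap.prodMk_left] with x h1 h2
    exact (memLp_two_iff_integrable_sq h2).2 h1
  have hgsec' : ∀ᵐ q ∂(μX.prod μY), MemLp (fun z => g (q.2, z)) 2 μZ :=
    Measure.quasiMeasurePreserving_snd.ae hgsec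
  have hhsec' : ∀ᵐ q ∂(μX.prod μY), MemLp (fun z => h (z, q.1)) 2 μZ :=
    Measure.quasiMeasurePreserving_fst.ae hhsec
  -- pointwise Cauchy-Schwarz bound on K
  have hKbound : ∀ᵐ q ∂(μX.prod μY), K q ^ 2 ≤ G q.2 * H q.1 := by
    filter_upwards [hgsec', hhsec'] with q h1 h2
    exact l2_cs_sq h1 h2
  -- the dominating function
  have hGHint : Integrable (fun q : X × Y => H q.1 * G q.2) (μX.prod μY) := hHint.mul_prod hGint
  have hSmem : MemLp (fun q : X × Y => Real.sqrt (G q.2 * H q.1)) 2 (μX.prod μY) := by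
    have hSm : AEStronglyMeasurable (fun q : X × Y => Real.sqrt (G q.2 * H q.1)) (μX.prod μY) :=
      Real.continuous_sqrt.comp_aestronglyMeasurable
        ((hGint.aestronglyMeasurable.comp_snd.mul hHint.aestronglyMeasurable.comp_fst))
    refine (memLp_two_iff_integrable_sq hSm).2 ?_
    refine hGHint.congr (Filter.Eventually.of_forall fun q => ?_)
    show H q.1 * G q.2 = Real.sqrt (G q.2 * H q.1) ^ 2
    rw [Real.sq_sqrt (mul_nonneg (hGnn _) (hHnn _)), mul_comm]
  -- K is in L²
  have hKmem : MemLp K 2 (μX.prod μY) := by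
    refine hSmem.of_le hKm ?_
    filter_upwards [hKbound] with q hq
    rw [Real.norm_eq_abs, Real.norm_eq_abs,
      abs_of_nonneg (Real.sqrt_nonneg _), ← Real.sqrt_sq_eq_abs]
    exact Real.sqrt_le_sqrt hq
  -- f * K is integrable
  have hfK : Integrable (fun q => f q * K q) (μX.prod μY) := by
    refine Integrable.mono' (g := fun q => (f q ^ 2 + K q ^ 2) / 2)
      ((hf.integrable_sq.add hKmem.integrable_sq).div_const 2) (hf.1.mul hKm) ?_
    filter_upwards with q
    rw [Real.norm_eq_abs, abs_mul]
    nlinarith [sq_nonneg (|f q| - |K q|), sq_abs (f q), sq_abs (K q), abs_nonneg (f q),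
      abs_nonneg (K q)]
  -- integral of K² is bounded
  have hK2le : (∫ q, K q ^ 2 ∂(μX.prod μY)) ≤
      (∫ q, g q ^ 2 ∂(μY.prod μZ)) * (∫ q, h q ^ 2 ∂(μZ.prod μX)) := by
    have step1 : (∫ q, K q ^ 2 ∂(μX.prod μY)) ≤ ∫ q : X × Y, H q.1 * G q.2 ∂(μX.prod μY) := by
      refine integral_mono_ae hKmem.integrable_sq hGHint ?_
      filter_upwards [hKbound] with q hq
      rw [mul_comm]; exact hq
    have step2 : (∫ q : X × Y, H q.1 * G q.2 ∂(μX.prod μY)) = (∫ x, H x ∂μX) * ∫ y, G y ∂μY :=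
      integral_prod_mul H G
    have step3 : (∫ y, G y ∂μY) = ∫ q, g q ^ 2 ∂(μY.prod μZ) :=
      (integral_prod _ hg2int).symm
    have step4 : (∫ x, H x ∂μX) = ∫ q, h q ^ 2 ∂(μZ.prod μX) :=
      (integral_prod_symm _ hh2int).symm
    calc (∫ q, K q ^ 2 ∂((μX.prod μY))) ≤ ∫ q : X × Y, H q.1 * G q.2 ∂((μX.prod μY)) := step1
      _ = (∫ x, H x ∂μX) * ∫ y, G y ∂μY := step2
      _ = (∫ q, h q ^ 2 ∂(μZ.prod μX)) * ∫ q, g q ^ 2 ∂(μY.prod μZ) := by rw [step3, step4]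
      _ = (∫ q, g q ^ 2 ∂(μY.prod μZ)) * ∫ q, h q ^ 2 ∂(μZ.prod μX) := mul_comm _ _
  have hf2nn : 0 ≤ ∫ q, f q ^ 2 ∂(μX.prod μY) := integral_nonneg fun q => sq_nonneg _
  have hg2nn : 0 ≤ ∫ q, g q ^ 2 ∂(μY.prod μZ) := integral_nonneg fun q => sq_nonneg _
  have hh2nn : 0 ≤ ∫ q, h q ^ 2 ∂(μZ.prod μX) := integral_nonneg fun q => sq_nonneg _
  calc (∫ x, ∫ y, ∫ z, f (x, y) * g (y, z) * h (z, x) ∂μZ ∂μY ∂μX)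
      = ∫ x, ∫ y, f (x, y) * K (x, y) ∂μY ∂μX := by
        simp_rw [mul_assoc, integral_const_mul]; rfl
    _ = ∫ q, f q * K q ∂(μX.prod μY) := (integral_prod _ hfK).symm
    _ ≤ Real.sqrt (∫ q, f q ^ 2 ∂(μX.prod μY)) * Real.sqrt (∫ q, K q ^ 2 ∂(μX.prod μY)) := l2_cs hf hKmem
    _ ≤ Real.sqrt (∫ q, f q ^ 2 ∂(μX.prod μY)) *
        Real.sqrt ((∫ q, g q ^ 2 ∂(μY.prod μZ)) * ∫ q, h q ^ 2 ∂(μZ.prod μX)) := by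
        have := Real.sqrt_le_sqrt hK2le
        gcongr
    _ = Real.sqrt ((∫ q, f q ^ 2 ∂(μX.prod μY)) * (∫ q, g q ^ 2 ∂(μY.prod μZ)) *
        (∫ q, h q ^ 2 ∂(μZ.prod μX))) := by
        rw [← Real.sqrt_mul hf2nn, mul_assoc]
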